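/- Let (X, d) be a cone metric space over a Banach space E with normal cone P of normal constant k. A sequence (xₙ) in X converges to x ∈ X (i.e., for every c ∈ E with c ≫ 0 there is N such that d(xₙ, x) ≪ c for all n > N) if and only if ‖d(xₙ, x)‖ → 0 as n → ∞. -/

import Mathlib

open Filter Topology Pointwise

/-- A cone in a real normed space: closed, nonempty, not `{0}`, closed under
nonnegative linear combinations, and pointed. -/
def IsCone {E : Type*} [NormedAddCommGroup E] [NormedSpace ℝ E] (P : Set E) : Prop :=
  IsClosed P ∧ P.Nonempty ∧ P ≠ {0} ∧
  (∀ a b : ℝ, 0 ≤ a → 0 ≤ b → ∀ x ∈ P, ∀ y ∈ P, a • x + b • y ∈ P) ∧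
  (∀ x ∈ P, -x ∈ P → x = 0)

/-- The partial ordering induced by a cone: `x ≤ y` iff `y - x ∈ P`. -/
def coneLE {E : Type*} [NormedAddCommGroup E] [NormedSpace ℝ E] (P : Set E) (x y : E) : Prop :=
  y - x ∈ P

/-- `P` is a normal cone with normal constant `k`: `0 ≤ x ≤ y` implies `‖x‖ ≤ k‖y‖`. -/
def IsNormalCone {E : Type*} [NormedAddCommGroup E] [NormedSpace ℝ E] (P : Set E) (k : ℝ) : Prop :=
  ∀ x y : E, x ∈ P → y - x ∈ P → ‖x‖ ≤ k * ‖y‖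

/-- `d` is a cone metric on `X` with values in `(E, P)`. -/
structure IsConeMetric {E : Type*} [NormedAddCommGroup E] [NormedSpace ℝ E]
    (P : Set E) {X : Type*} (d : X → X → E) : Prop where
  mem_cone : ∀ x y, d x y ∈ P
  eq_zero_iff : ∀ x y, d x y = 0 ↔ x = y
  symm : ∀ x y, d x y = d y x
  triangle : ∀ x y z, d x z + d z y - d x y ∈ P

/-- Convergence of a sequence in a cone metric space. -/
def ConeConv {E : Type*} [NormedAddCommGroup E] [NormedSpace ℝ E]
    (P : Set E) {X : Type*} (d : X → X → E) (s : ℕ → X) (x : X) : Prop :=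
  ∀ c ∈ interior P, ∃ N, ∀ n > N, c - d (s n) x ∈ interior P

/-- Cauchy sequences in a cone metric space. -/
def ConeCauchy {E : Type*} [NormedAddCommGroup E] [NormedSpace ℝ E]
    (P : Set E) {X : Type*} (d : X → X → E) (s : ℕ → X) : Prop :=
  ∀ c ∈ interior P, ∃ N, ∀ n > N, ∀ m > N, c - d (s n) (s m) ∈ interior P

/-- A cone metric space is complete if every Cauchy sequence converges. -/
def ConeComplete {E : Type*} [NormedAddCommGroup E] [NormedSpace ℝ E]
    (P : Set E) {X : Type*} (d : X → X → E) : Prop :=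
  ∀ s : ℕ → X, ConeCauchy P d s → ∃ x, ConeConv P d s x

theorem coneConv_iff_norm_tendsto_zero {E : Type*} [NormedAddCommGroup E] [NormedSpace ℝ E]
    [CompleteSpace E] {X : Type*} (P : Set E) (hP : IsCone P)
    (hint : (interior P).Nonempty) (k : ℝ) (hk : 0 < k) (hnorm : IsNormalCone P k)
    (d : X → X → E) (hd : IsConeMetric P d) (s : ℕ → X) (x : X) :
    ConeConv P d s x ↔ Tendsto (fun n => ‖d (s n) x‖) atTop (𝓝 0) := by
  obtain ⟨hclosed, hne, hne0, hcomb, hpt⟩ := hP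
  obtain ⟨c₀, hc₀⟩ := hint
  have hp : ∃ p ∈ P, p ≠ 0 := by
    by_contra h
    push_neg at h
    apply hne0
    obtain ⟨q, hq⟩ := hne
    have hq0 : q = 0 := h q hq
    ext z
    simp only [Set.mem_singleton_iff]
    exact ⟨fun hz => h z hz, fun hz => hz ▸ hq0 ▸ hq⟩
  have hc₀ne : c₀ ≠ 0 := by
    obtain ⟨p, hpP, hpne⟩ := hp
    intro h0
    rw [h0] at hc₀
    obtain ⟨r, hr, hball⟩ := Metric.isOpen_iff.mp isOpen_interior 0 hc₀
    have hpnorm : 0 < ‖p‖ := norm_pos_iff.mpr hpne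
    set q := (r / (2 * ‖p‖)) • p with hqdef
    have hqnorm : ‖q‖ = r / 2 := by
      rw [hqdef, norm_smul, Real.norm_of_nonneg (by positivity)]
      field_simp
    have hqball : q ∈ Metric.ball (0 : E) r := by
      rw [Metric.mem_ball, dist_zero_right, hqnorm]; linarith
    have hqball' : -q ∈ Metric.ball (0 : E) r := by
      rw [Metric.mem_ball, dist_zero_right, norm_neg, hqnorm]; linarith
    have hq0 : q = 0 := hpt q (interior_subset (hball hqball))
      (interior_subset (hball hqball'))
    rw [hq0] at hqnorm
    simp at hqnorm
    linarith
  have hsmul : ∀ t : ℝ, 0 < t → ∀ y ∈ interior P, t • y ∈ interior P := by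
    intro t ht y hy
    have hsub : t • interior P ⊆ interior P := by
      apply interior_maximal
      · intro z hz
        obtain ⟨w, hw, rfl⟩ := hz
        have := hcomb t 0 ht.le le_rfl w (interior_subset hw) w (interior_subset hw)
        simpa using this
      · exact isOpen_interior.smul₀ ht.ne'
    exact hsub (Set.smul_mem_smul_set hy)
  constructor
  · intro hconv
    rw [Metric.tendsto_atTop]
    intro ε hε
    have hc₀pos : 0 < ‖c₀‖ := norm_pos_iff.mpr hc₀ne
    set t := ε / (2 * k * ‖c₀‖) with ht
    have htpos : 0 < t := by positivity
    obtain ⟨N, hN⟩ := hconv (t • c₀) (hsmul t htpos c₀ hc₀)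
    refine ⟨N + 1, fun n hn => ?_⟩
    have h1 := hN n (by omega)
    have h2 : ‖d (s n) x‖ ≤ k * ‖t • c₀‖ :=
      hnorm _ _ (hd.mem_cone _ _) (interior_subset h1)
    rw [Real.dist_eq, sub_zero, abs_of_nonneg (norm_nonneg _)]
    calc ‖d (s n) x‖ ≤ k * ‖t • c₀‖ := h2
      _ = ε / 2 := by
          rw [norm_smul, Real.norm_of_nonneg htpos.le, ht]
          field_simp
      _ < ε := by linarith
  · intro htend c hc
    obtain ⟨r, hr, hball⟩ := Metric.isOpen_iff.mp isOpen_interior c hc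
    rw [Metric.tendsto_atTop] at htend
    obtain ⟨N, hN⟩ := htend r hr
    refine ⟨N, fun n hn => ?_⟩
    apply hball
    have := hN n hn.le
    rw [Real.dist_eq, sub_zero, abs_of_nonneg (norm_nonneg _)] at this
    rw [Metric.mem_ball, dist_eq_norm]
    simpa using this
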